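/- Under the stated assumptions with ε_ν normally distributed with mean 0 and variance σ_ν², the variance of Z, defined as Var(Z) = E[|Z|²] − |E[Z]|², equals (1 − exp(−σ_ν²))·z² + σ_z². -/

import Mathlib

open MeasureTheory ProbabilityTheory Complex

lemma integral_cexp_I_gaussian (ν : ℝ) (v : NNReal) :
    ∫ x : ℝ, Complex.exp (Complex.I * ((ν + x : ℝ) : ℂ)) ∂(gaussianReal 0 v)
      = Real.exp (-(v : ℝ) / 2) • Complex.exp (Complex.I * (ν : ℂ)) := by
  by_cases hv : v = 0
  · subst hv
    rw [gaussianReal_zero_var, integral_dirac]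
    simp
  · have hvpos : (0 : ℝ) < (v : ℝ) := by positivity
    rw [gaussianReal_of_var_ne_zero _ hv]
    have hdens : (gaussianPDF 0 v) =
        fun x => ((Real.toNNReal (gaussianPDFReal 0 v x) : NNReal) : ENNReal) := by
      funext x
      rfl
    rw [hdens, integral_withDensity_eq_integral_smul
      ((measurable_gaussianPDFReal 0 v).real_toNNReal)]
    have hsmul : ∀ x : ℝ, (Real.toNNReal (gaussianPDFReal 0 v x)) •
        Complex.exp (Complex.I * ((ν + x : ℝ) : ℂ))
        = ((Real.sqrt (2 * Real.pi * v))⁻¹ : ℝ) •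
          Complex.exp ((-(1 / (2 * (v : ℝ)) : ℝ) : ℂ) * (x : ℂ) ^ 2
            + Complex.I * (x : ℂ) + Complex.I * (ν : ℂ)) := by
      intro x
      have h1 : (Real.toNNReal (gaussianPDFReal 0 v x) : ℝ) = gaussianPDFReal 0 v x :=
        Real.coe_toNNReal _ (gaussianPDFReal_nonneg 0 v x)
      rw [NNReal.smul_def, h1]
      rw [gaussianPDFReal]
      rw [mul_smul]
      congr 1
      rw [Complex.real_smul, Complex.ofReal_exp, ← Complex.exp_add]
      congr 1
      push_cast
      have h2v : ((v : ℂ)) ≠ 0 := by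
        simp only [ne_eq, Complex.ofReal_eq_zero, NNReal.coe_eq_zero]
        exact hv
      field_simp
      ring
    rw [funext hsmul, integral_smul]
    have hb : ((-(1 / (2 * (v : ℝ)) : ℝ) : ℂ)).re < 0 := by
      simp only [Complex.ofReal_neg, neg_re, Complex.ofReal_re, neg_lt_zero]
      positivity
    rw [integral_cexp_quadratic hb (Complex.I) (Complex.I * (ν : ℂ))]
    have hI2 : (Complex.I : ℂ) ^ 2 = -1 := Complex.I_sq
    have hexp : Complex.I * (ν : ℂ) - (Complex.I) ^ 2 /
        (4 * ((-(1 / (2 * (v : ℝ)) : ℝ) : ℂ)))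
        = ((-(v : ℝ) / 2 : ℝ) : ℂ) + Complex.I * (ν : ℂ) := by
      rw [hI2]
      have h2v : ((2 * (v : ℝ) : ℝ) : ℂ) ≠ 0 := by
        simp only [ne_eq, Complex.ofReal_eq_zero]
        positivity
      push_cast
      field_simp
      ring
    rw [hexp, Complex.exp_add]
    have hpow : ((Real.pi : ℂ) / -((-(1 / (2 * (v : ℝ)) : ℝ) : ℂ))) ^ (1 / 2 : ℂ)
        = ((Real.sqrt (2 * Real.pi * v) : ℝ) : ℂ) := by
      have h1 : ((Real.pi : ℂ) / -((-(1 / (2 * (v : ℝ)) : ℝ) : ℂ)))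
          = ((2 * Real.pi * v : ℝ) : ℂ) := by
        push_cast
        have : (1 / (2 * (v : ℝ)) : ℂ) ≠ 0 := by
          simp only [ne_eq, div_eq_zero_iff, one_ne_zero, false_or]
          intro h
          rw [show ((2 : ℂ) * (v : ℝ) ) = (((2 * (v:ℝ) : ℝ)) : ℂ) by push_cast; ring] at h
          rw [Complex.ofReal_eq_zero] at h
          exact absurd h (by positivity)
        field_simp
      rw [h1]
      have h2 : (1 / 2 : ℂ) = ((1 / 2 : ℝ) : ℂ) := by push_cast; ring
      rw [h2, ← Complex.ofReal_cpow (by positivity), Real.sqrt_eq_rpow]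
    rw [hpow]
    have hsqrt : ((Real.sqrt (2 * Real.pi * v) : ℝ) : ℂ) ≠ 0 := by
      simp only [ne_eq, Complex.ofReal_eq_zero]
      positivity
    rw [Complex.real_smul, Complex.real_smul, Complex.ofReal_inv, Complex.ofReal_exp]
    have h2 : ((Real.sqrt 2 : ℝ) : ℂ) ≠ 0 := by
      simp only [ne_eq, Complex.ofReal_eq_zero]; positivity
    have h3 : ((Real.sqrt Real.pi : ℝ) : ℂ) ≠ 0 := by
      simp only [ne_eq, Complex.ofReal_eq_zero]
      positivity
    have h4 : ((Real.sqrt (v : ℝ) : ℝ) : ℂ) ≠ 0 := by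
      simp only [ne_eq, Complex.ofReal_eq_zero]
      positivity
    field_simp

/-- Corollary (variance, Gaussian phase noise): if `ε_ν ~ N(0, σ_ν²)`, then
`Var(Z) = E[|Z|²] − |E[Z]|² = (1 − exp(−σ_ν²))·z² + σ_z²` for
`Z = (z + ε_z)·exp(i(ν + ε_ν))`. -/
theorem variance_of_noisy_phasor_gaussian
    {Ω : Type*} [MeasurableSpace Ω] (μ : Measure Ω) [IsProbabilityMeasure μ]
    (z ν σz : ℝ) (σν2 : NNReal) (εz εν : Ω → ℝ)
    (hmz : Measurable εz) (hmν : Measurable εν)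
    (hindep : IndepFun εz εν μ)
    (hiz : Integrable εz μ)
    (hiz2 : Integrable (fun ω => (εz ω) ^ 2) μ)
    (hEz : ∫ ω, εz ω ∂μ = 0)
    (hEz2 : ∫ ω, (εz ω) ^ 2 ∂μ = σz ^ 2)
    (hgauss : Measure.map εν μ = gaussianReal 0 σν2) :
    (∫ ω, ‖(((z + εz ω : ℝ) : ℂ)
          * Complex.exp (Complex.I * ((ν + εν ω : ℝ) : ℂ)))‖ ^ 2 ∂μ)
      - ‖(∫ ω, ((z + εz ω : ℝ) : ℂ)
          * Complex.exp (Complex.I * ((ν + εν ω : ℝ) : ℂ)) ∂μ)‖ ^ 2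
      = (1 - Real.exp (-(σν2 : ℝ))) * z ^ 2 + σz ^ 2 := by
  set A : Ω → ℝ := fun ω => z + εz ω with hA
  set C : Ω → ℝ := fun ω => Real.cos (ν + εν ω) with hC
  set S : Ω → ℝ := fun ω => Real.sin (ν + εν ω) with hS
  set K : ℂ := Real.exp (-(σν2 : ℝ) / 2) • Complex.exp (Complex.I * (ν : ℂ)) with hKdef
  have hiA : Integrable A μ := (integrable_const z).add hiz
  have hEA : ∫ ω, A ω ∂μ = z := by
    rw [hA, integral_add (integrable_const z) hiz, integral_const, hEz]
    simp
  -- first moment squared term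
  have h1 : (∫ ω, ‖(((z + εz ω : ℝ) : ℂ)
        * Complex.exp (Complex.I * ((ν + εν ω : ℝ) : ℂ)))‖ ^ 2 ∂μ) = z ^ 2 + σz ^ 2 := by
    have heq : ∀ ω, ‖(((z + εz ω : ℝ) : ℂ)
        * Complex.exp (Complex.I * ((ν + εν ω : ℝ) : ℂ)))‖ ^ 2
        = z ^ 2 + 2 * z * εz ω + εz ω ^ 2 := by
      intro ω
      rw [norm_mul, Complex.norm_real, Real.norm_eq_abs, Complex.norm_exp]
      have hre : (Complex.I * ((ν + εν ω : ℝ) : ℂ)).re = 0 := by simp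
      rw [hre, Real.exp_zero, mul_one, _root_.sq_abs]
      ring
    simp_rw [heq]
    have hf1 : Integrable (fun ω => z ^ 2 + 2 * z * εz ω) μ :=
      (integrable_const _).add (hiz.const_mul _)
    have hf2 : Integrable (fun ω => 2 * z * εz ω) μ := hiz.const_mul _
    rw [integral_add hf1 hiz2, integral_add (integrable_const (z ^ 2)) hf2,
      integral_const, integral_const_mul, hEz, hEz2]
    simp
  -- the characteristic-function integral
  have hsmexp : AEStronglyMeasurable
      (fun x : ℝ => Complex.exp (Complex.I * ((ν + x : ℝ) : ℂ))) (Measure.map εν μ) := by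
    apply Continuous.aestronglyMeasurable
    fun_prop
  have hK : ∫ ω, Complex.exp (Complex.I * ((ν + εν ω : ℝ) : ℂ)) ∂μ = K := by
    rw [← integral_map hmν.aemeasurable hsmexp, hgauss, integral_cexp_I_gaussian]
  have hiE : Integrable (fun ω => Complex.exp (Complex.I * ((ν + εν ω : ℝ) : ℂ))) μ := by
    refine (integrable_const (1 : ℝ)).mono' ?_ ?_
    · apply Measurable.aestronglyMeasurable
      fun_prop
    · filter_upwards with ω
      rw [Complex.norm_exp]
      have hre : (Complex.I * ((ν + εν ω : ℝ) : ℂ)).re = 0 := by simp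
      rw [hre, Real.exp_zero]
  have hCre : ∀ ω, C ω = (Complex.exp (Complex.I * ((ν + εν ω : ℝ) : ℂ))).re := by
    intro ω
    rw [mul_comm, Complex.exp_ofReal_mul_I_re]
  have hSim : ∀ ω, S ω = (Complex.exp (Complex.I * ((ν + εν ω : ℝ) : ℂ))).im := by
    intro ω
    rw [mul_comm, Complex.exp_ofReal_mul_I_im]
  have hEC : ∫ ω, C ω ∂μ = K.re := by
    simp_rw [hCre]
    have := integral_re (𝕜 := ℂ) hiE
    simp only [RCLike.re_to_complex] at this
    rw [this, hK]
  have hES : ∫ ω, S ω ∂μ = K.im := by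
    simp_rw [hSim]
    have := integral_im (𝕜 := ℂ) hiE
    simp only [RCLike.im_to_complex] at this
    rw [this, hK]
  -- integrability of C, S
  have hmC : Measurable C := by fun_prop
  have hmS : Measurable S := by fun_prop
  have hiC : Integrable C μ := by
    refine (integrable_const (1 : ℝ)).mono' hmC.aestronglyMeasurable ?_
    filter_upwards with ω
    exact Real.abs_cos_le_one _
  have hiS : Integrable S μ := by
    refine (integrable_const (1 : ℝ)).mono' hmS.aestronglyMeasurable ?_
    filter_upwards with ω
    exact Real.abs_sin_le_one _
  -- independence
  have hindAC : IndepFun A C μ :=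
    hindep.comp (measurable_id.const_add z) (Real.measurable_cos.comp (measurable_id.const_add ν))
  have hindAS : IndepFun A S μ :=
    hindep.comp (measurable_id.const_add z) (Real.measurable_sin.comp (measurable_id.const_add ν))
  have hEAC : ∫ ω, A ω * C ω ∂μ = z * K.re := by
    have h : ∫ ω, A ω * C ω ∂μ = (∫ ω, A ω ∂μ) * ∫ ω, C ω ∂μ :=
      hindAC.integral_fun_mul_eq_mul_integral hiA.aestronglyMeasurable hiC.aestronglyMeasurable
    rw [h, hEA, hEC]
  have hEAS : ∫ ω, A ω * S ω ∂μ = z * K.im := by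
    have h : ∫ ω, A ω * S ω ∂μ = (∫ ω, A ω ∂μ) * ∫ ω, S ω ∂μ :=
      hindAS.integral_fun_mul_eq_mul_integral hiA.aestronglyMeasurable hiS.aestronglyMeasurable
    rw [h, hEA, hES]
  have hiAC : Integrable (fun ω => A ω * C ω) μ := hindAC.integrable_mul hiA hiC
  have hiAS : Integrable (fun ω => A ω * S ω) μ := hindAS.integrable_mul hiA hiS
  -- compute E[Z]
  have hZ : ∫ ω, ((z + εz ω : ℝ) : ℂ)
      * Complex.exp (Complex.I * ((ν + εν ω : ℝ) : ℂ)) ∂μ = (z : ℂ) * K := by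
    have hsplit : ∀ ω, ((z + εz ω : ℝ) : ℂ)
        * Complex.exp (Complex.I * ((ν + εν ω : ℝ) : ℂ))
        = ((A ω * C ω : ℝ) : ℂ) + ((A ω * S ω : ℝ) : ℂ) * Complex.I := by
      intro ω
      rw [mul_comm Complex.I, Complex.exp_mul_I, ← Complex.ofReal_cos, ← Complex.ofReal_sin]
      push_cast [hA, hC, hS]
      ring
    simp_rw [hsplit]
    have hiAC' : Integrable (fun ω => ((A ω * C ω : ℝ) : ℂ)) μ := hiAC.ofReal
    have hiAS' : Integrable (fun ω => ((A ω * S ω : ℝ) : ℂ)) μ := hiAS.ofReal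
    have hoR1 : ∫ ω, ((A ω * C ω : ℝ) : ℂ) ∂μ = ((∫ ω, A ω * C ω ∂μ : ℝ) : ℂ) :=
      integral_ofReal
    have hoR2 : ∫ ω, ((A ω * S ω : ℝ) : ℂ) ∂μ = ((∫ ω, A ω * S ω ∂μ : ℝ) : ℂ) :=
      integral_ofReal
    rw [integral_add hiAC' (hiAS'.mul_const Complex.I),
      integral_mul_const, hoR1, hoR2, hEAC, hEAS]
    have : ((z * K.re : ℝ) : ℂ) + ((z * K.im : ℝ) : ℂ) * Complex.I
        = (z : ℂ) * ((K.re : ℂ) + (K.im : ℂ) * Complex.I) := by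
      push_cast
      ring
    rw [this, Complex.re_add_im]
  have habs : ‖(∫ ω, ((z + εz ω : ℝ) : ℂ)
      * Complex.exp (Complex.I * ((ν + εν ω : ℝ) : ℂ)) ∂μ)‖ ^ 2
      = Real.exp (-(σν2 : ℝ)) * z ^ 2 := by
    rw [hZ, hKdef, Complex.real_smul, norm_mul, norm_mul, Complex.norm_real,
      Complex.norm_real, Real.norm_eq_abs, Real.norm_eq_abs, Complex.norm_exp]
    have hre : (Complex.I * (ν : ℂ)).re = 0 := by simp
    rw [hre, Real.exp_zero, mul_one, abs_of_pos (Real.exp_pos _)]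
    have hexp2 : Real.exp (-(σν2 : ℝ) / 2) ^ 2 = Real.exp (-(σν2 : ℝ)) := by
      rw [sq, ← Real.exp_add]
      norm_num
    rw [mul_pow, _root_.sq_abs, hexp2]
    ring
  rw [h1, habs]
  ring
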